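/- Fix an integer n ≥ 2 and s ∈ (0,1). There exist positive continuous functions L(n,s) and M(n,s) ∈ (0,1) such that for all a, x > 0 with a/x ≤ M(n,s), any intermediate point α ∈ [0,1] satisfying (a+x)^s = Σ_{k=0}^{n−1} C(s,k) a^{s−k} x^k + C(s,n)(a + αx)^{s−n} x^n (where C(s,k) denotes the generalized binomial coefficient s(s−1)⋯(s−k+1)/k!) satisfies α ≥ (a/x)^{(n−1−s)/(n−s)} · L(n,s). One may take L(n,s) = (1/2)(|C(s,n)|/(|C(s,n−1)|+1))^{1/(n−s)} and M(n,s) = min(1, c^{−1/(1−s)}, (1/2)^{n−s}|C(s,n)|/(|C(s,n−1)|+1)) with c = 2^s + Σ_{k=0}^{n−2}|C(s,k)|. -/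

import Mathlib

/-- Generalized binomial coefficient `s(s-1)⋯(s-k+1)/k!`. -/
noncomputable def genBinom (s : ℝ) (k : ℕ) : ℝ :=
  (∏ i ∈ Finset.range k, (s - i)) / (Nat.factorial k)

lemma genBinom_ne_zero {s : ℝ} (hs : s ∈ Set.Ioo (0:ℝ) 1) (n : ℕ) : genBinom s n ≠ 0 := by
  unfold genBinom
  apply div_ne_zero
  · apply Finset.prod_ne_zero_iff.2
    intro i _
    rcases Nat.eq_zero_or_pos i with h | h
    · simp [h]; exact ne_of_gt hs.1
    · have : (1:ℝ) ≤ i := by exact_mod_cast h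
      nlinarith [hs.2]
  · positivity

set_option maxHeartbeats 1600000 in
/-- lower bound on the intermediate point in the `n`-th order
Taylor expansion of `(a + x) ^ s`, for `n ≥ 2`. -/
theorem intermediate_point_lower_bound_higher_order
    (n : ℕ) (hn : 2 ≤ n) (s : ℝ) (hs : s ∈ Set.Ioo (0 : ℝ) 1)
    (a x : ℝ) (ha : 0 < a) (hx : 0 < x)
    (hM : a / x ≤
      min 1 (min ((2 ^ s + ∑ k ∈ Finset.range (n - 1), |genBinom s k|) ^ (-(1 : ℝ) / (1 - s)))
        (((1 : ℝ) / 2) ^ ((n : ℝ) - s) * |genBinom s n| / (|genBinom s (n - 1)| + 1))))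
    (α : ℝ) (hα : α ∈ Set.Icc (0 : ℝ) 1)
    (heq : (a + x) ^ s =
      (∑ k ∈ Finset.range n, genBinom s k * a ^ (s - k) * x ^ k) +
        genBinom s n * (a + α * x) ^ (s - n) * x ^ n) :
    (a / x) ^ (((n : ℝ) - 1 - s) / ((n : ℝ) - s)) *
        ((1 : ℝ) / 2 * (|genBinom s n| / (|genBinom s (n - 1)| + 1)) ^ ((1 : ℝ) / ((n : ℝ) - s)))
      ≤ α := by
  obtain ⟨hs0, hs1⟩ := hs
  obtain ⟨hα0, hα1⟩ := hα
  set r : ℝ := a / x with hr_def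
  set c : ℝ := 2 ^ s + ∑ k ∈ Finset.range (n - 1), |genBinom s k| with hc_def
  set B : ℝ := |genBinom s (n - 1)| with hB_def
  set C : ℝ := |genBinom s n| with hC_def
  have hr0 : 0 < r := div_pos ha hx
  have hr1 : r ≤ 1 := le_trans hM (min_le_left _ _)
  have hr2 : r ≤ c ^ (-(1:ℝ) / (1 - s)) :=
    le_trans hM (le_trans (min_le_right _ _) (min_le_left _ _))
  have hr3 : r ≤ ((1:ℝ)/2) ^ ((n:ℝ) - s) * C / (B + 1) :=
    le_trans hM (le_trans (min_le_right _ _) (min_le_right _ _))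
  have hC0 : 0 < C := abs_pos.2 (genBinom_ne_zero ⟨hs0, hs1⟩ n)
  have hB1 : 0 < B + 1 := by positivity
  have hn2 : (2:ℝ) ≤ (n:ℝ) := by exact_mod_cast hn
  have hp : 0 < (n:ℝ) - s := by linarith
  set u : ℝ := r + α with hu_def
  have hu0 : 0 < u := by positivity
  have hux : a + α * x = u * x := by
    rw [hu_def, hr_def, add_mul, div_mul_cancel₀ a hx.ne']
  clear_value r c B C u
  have hxs : (0:ℝ) < x ^ s := Real.rpow_pos_of_pos hx s
  have hax : r * x = a := by rw [hr_def, div_mul_cancel₀ a hx.ne']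
  -- rewriting power products
  have hrw2 : ∀ k : ℕ, a ^ (s - (k:ℝ)) * x ^ k = x ^ s * r ^ (s - (k:ℝ)) := by
    intro k
    have hsk : s - (k:ℝ) + k = s := by ring
    rw [← hax, Real.mul_rpow hr0.le hx.le, ← Real.rpow_natCast x k, mul_assoc,
      ← Real.rpow_add hx, hsk]
    ring
  have hrw1 : (a + α * x) ^ (s - (n:ℝ)) * x ^ n = x ^ s * u ^ (s - (n:ℝ)) := by
    have hsn : s - (n:ℝ) + n = s := by ring
    rw [hux, Real.mul_rpow hu0.le hx.le, ← Real.rpow_natCast x n, mul_assoc,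
      ← Real.rpow_add hx, hsn]
    ring
  have hcast : ((n - 1 : ℕ) : ℝ) = (n:ℝ) - 1 := by
    rw [Nat.cast_sub (by omega : 1 ≤ n)]; norm_num
  -- split the sum
  have hsplit : (∑ k ∈ Finset.range n, genBinom s k * a ^ (s - (k:ℝ)) * x ^ k)
      = (∑ k ∈ Finset.range (n-1), genBinom s k * a ^ (s - (k:ℝ)) * x ^ k)
        + genBinom s (n-1) * a ^ (s - (((n-1):ℕ):ℝ)) * x ^ (n-1) := by
    conv_lhs => rw [show n = (n-1)+1 from (Nat.succ_pred_eq_of_pos (by omega)).symm]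
    rw [Finset.sum_range_succ]
  set S : ℝ := ∑ k ∈ Finset.range (n-1), genBinom s k * a ^ (s - (k:ℝ)) * x ^ k with hS_def
  set T : ℝ := genBinom s (n-1) * a ^ (s - (((n-1):ℕ):ℝ)) * x ^ (n-1) with hT_def
  have heq2 : genBinom s n * ((a + α * x) ^ (s - (n:ℝ)) * x ^ n) = (a+x) ^ s - S - T := by
    rw [← mul_assoc]
    rw [hsplit] at heq
    rw [heq]
    ring
  -- absolute value bound
  have habs : C * (x ^ s * u ^ (s - (n:ℝ)))
      ≤ ((a+x) ^ s + ∑ k ∈ Finset.range (n-1), |genBinom s k| * (x ^ s * r ^ (s - (k:ℝ))))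
        + B * (x ^ s * r ^ (s - ((n:ℝ) - 1))) := by
    have e1 : C * (x ^ s * u ^ (s - (n:ℝ))) = |(a+x) ^ s - S - T| := by
      rw [← heq2, abs_mul, ← hrw1, abs_of_pos (by positivity : (0:ℝ) < (a + α * x) ^ (s - (n:ℝ)) * x ^ n), hrw1, hC_def]
    have e2 : |(a+x) ^ s - S - T| ≤ (|(a+x) ^ s| + |S|) + |T| :=
      le_trans (abs_sub _ _) (by gcongr; exact abs_sub _ _)
    have e3 : |(a+x) ^ s| = (a+x) ^ s := abs_of_pos (Real.rpow_pos_of_pos (by linarith) s)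
    have e4 : |S| ≤ ∑ k ∈ Finset.range (n-1), |genBinom s k| * (x ^ s * r ^ (s - (k:ℝ))) := by
      refine le_trans (Finset.abs_sum_le_sum_abs _ _) (Finset.sum_le_sum fun k _ => ?_)
      rw [mul_assoc, abs_mul, hrw2 k,
        abs_of_pos (by positivity : (0:ℝ) < x ^ s * r ^ (s - (k:ℝ)))]
    have e5 : |T| = B * (x ^ s * r ^ (s - ((n:ℝ) - 1))) := by
      rw [hT_def, mul_assoc, abs_mul, hB_def]
      congr 1
      rw [hrw2 (n-1), hcast]
      exact abs_of_pos (by positivity)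
    rw [e1]
    calc |(a+x) ^ s - S - T| ≤ (|(a+x) ^ s| + |S|) + |T| := e2
      _ ≤ ((a+x) ^ s + ∑ k ∈ Finset.range (n-1), |genBinom s k| * (x ^ s * r ^ (s - (k:ℝ))))
          + B * (x ^ s * r ^ (s - ((n:ℝ) - 1))) := by
        rw [e3, e5]; gcongr
  -- junk bound
  have hc0 : (1:ℝ) ≤ c := by
    have h1 : (1:ℝ) ≤ 2 ^ s := by
      rw [show (1:ℝ) = (2:ℝ) ^ (0:ℝ) by simp]
      exact Real.rpow_le_rpow_of_exponent_le (by norm_num) hs0.le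
    have h2 : (0:ℝ) ≤ ∑ k ∈ Finset.range (n - 1), |genBinom s k| :=
      Finset.sum_nonneg fun k _ => abs_nonneg _
    rw [hc_def]; linarith
  have hcr : c ≤ r ^ (s - 1) := by
    have h1 : r ^ (1 - s) ≤ c ^ (-(1:ℝ) / (1 - s) * (1 - s)) := by
      rw [Real.rpow_mul (by linarith : (0:ℝ) ≤ c)]
      exact Real.rpow_le_rpow hr0.le hr2 (by linarith)
    have h2 : c ^ (-(1:ℝ) / (1 - s) * (1 - s)) = c⁻¹ := by
      rw [show -(1:ℝ) / (1 - s) * (1 - s) = -1 from div_mul_cancel₀ _ (by linarith : (1:ℝ) - s ≠ 0), Real.rpow_neg_one]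
    rw [h2] at h1
    have h3 : (c⁻¹)⁻¹ ≤ (r ^ (1 - s))⁻¹ :=
      inv_anti₀ (Real.rpow_pos_of_pos hr0 _) h1
    rw [inv_inv] at h3
    calc c ≤ (r ^ (1 - s))⁻¹ := h3
      _ = r ^ (s - 1) := by rw [← Real.rpow_neg hr0.le]; norm_num
  set m : ℝ := min 0 (s - (n:ℝ) + 2) with hm_def
  have hm0 : m ≤ 0 := min_le_left _ _
  have hm2 : m ≤ s - (n:ℝ) + 2 := min_le_right _ _
  have hm8 : (2:ℝ) - (n:ℝ) ≤ m := le_min (by linarith) (by linarith)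
  clear_value m
  have hjunk : ((a+x) ^ s + ∑ k ∈ Finset.range (n-1), |genBinom s k| * (x ^ s * r ^ (s - (k:ℝ))))
      ≤ x ^ s * r ^ (s - ((n:ℝ) - 1)) := by
    have hrm1 : (1:ℝ) ≤ r ^ m := by
      rw [show (1:ℝ) = r ^ (0:ℝ) by simp]
      exact Real.rpow_le_rpow_of_exponent_ge hr0 hr1 hm0
    have hA : (a+x) ^ s ≤ 2 ^ s * (x ^ s * r ^ m) := by
      have hax2 : a ≤ x := by
        rw [← hax]
        calc r * x ≤ 1 * x := mul_le_mul_of_nonneg_right hr1 hx.le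
          _ = x := one_mul x
      have h1 : (a+x) ^ s ≤ (2*x) ^ s :=
        Real.rpow_le_rpow (by linarith) (by linarith) hs0.le
      have h4 : (0:ℝ) < (2:ℝ) ^ s := Real.rpow_pos_of_pos (by norm_num) s
      calc (a+x) ^ s ≤ (2*x) ^ s := h1
        _ = 2 ^ s * x ^ s := Real.mul_rpow (by norm_num) hx.le
        _ ≤ 2 ^ s * (x ^ s * r ^ m) :=
            mul_le_mul_of_nonneg_left (le_mul_of_one_le_right hxs.le hrm1) h4.le
    have hSb : (∑ k ∈ Finset.range (n-1), |genBinom s k| * (x ^ s * r ^ (s - (k:ℝ))))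
        ≤ (∑ k ∈ Finset.range (n - 1), |genBinom s k|) * (x ^ s * r ^ m) := by
      rw [Finset.sum_mul]
      refine Finset.sum_le_sum fun k hk => ?_
      have hk2 : (k:ℝ) ≤ (n:ℝ) - 2 := by
        have : k ≤ n - 2 := by
          have := Finset.mem_range.1 hk; omega
        have h5 : (k:ℝ) ≤ ((n-2 : ℕ):ℝ) := by exact_mod_cast this
        rw [Nat.cast_sub (by omega : 2 ≤ n)] at h5
        push_cast at h5
        linarith
      have : r ^ (s - (k:ℝ)) ≤ r ^ m :=
        Real.rpow_le_rpow_of_exponent_ge hr0 hr1 (by linarith)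
      exact mul_le_mul_of_nonneg_left (mul_le_mul_of_nonneg_left this hxs.le) (abs_nonneg _)
    have hcrm : c * r ^ m ≤ r ^ (s - ((n:ℝ) - 1)) := by
      have h6 : c * r ^ m ≤ r ^ (s - 1) * r ^ m :=
        mul_le_mul_of_nonneg_right hcr (Real.rpow_nonneg hr0.le _)
      have h7 : r ^ (s - 1) * r ^ m = r ^ (s - 1 + m) := (Real.rpow_add hr0 _ _).symm
      have h9 : r ^ (s - 1 + m) ≤ r ^ (s - ((n:ℝ) - 1)) :=
        Real.rpow_le_rpow_of_exponent_ge hr0 hr1 (by linarith)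
      rw [h7] at h6
      linarith only [h6, h9]
    calc ((a+x) ^ s + ∑ k ∈ Finset.range (n-1), |genBinom s k| * (x ^ s * r ^ (s - (k:ℝ))))
        ≤ 2 ^ s * (x ^ s * r ^ m) + (∑ k ∈ Finset.range (n - 1), |genBinom s k|) * (x ^ s * r ^ m) :=
          add_le_add hA hSb
      _ = c * r ^ m * x ^ s := by rw [hc_def]; ring
      _ ≤ r ^ (s - ((n:ℝ) - 1)) * x ^ s := mul_le_mul_of_nonneg_right hcrm hxs.le
      _ = x ^ s * r ^ (s - ((n:ℝ) - 1)) := by ring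
  -- key inequality
  have key : C * u ^ (s - (n:ℝ)) ≤ (B + 1) * r ^ (s - ((n:ℝ) - 1)) := by
    have h1 : C * (x ^ s * u ^ (s - (n:ℝ))) ≤ (B + 1) * (x ^ s * r ^ (s - ((n:ℝ) - 1))) := by
      calc C * (x ^ s * u ^ (s - (n:ℝ)))
          ≤ ((a+x) ^ s + ∑ k ∈ Finset.range (n-1), |genBinom s k| * (x ^ s * r ^ (s - (k:ℝ))))
            + B * (x ^ s * r ^ (s - ((n:ℝ) - 1))) := habs
        _ ≤ x ^ s * r ^ (s - ((n:ℝ) - 1)) + B * (x ^ s * r ^ (s - ((n:ℝ) - 1))) :=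
            add_le_add_left hjunk _
        _ = (B + 1) * (x ^ s * r ^ (s - ((n:ℝ) - 1))) := by ring
    have h2 : (C * u ^ (s - (n:ℝ))) * x ^ s ≤ ((B + 1) * r ^ (s - ((n:ℝ) - 1))) * x ^ s := by
      calc (C * u ^ (s - (n:ℝ))) * x ^ s = C * (x ^ s * u ^ (s - (n:ℝ))) := by ring
        _ ≤ (B + 1) * (x ^ s * r ^ (s - ((n:ℝ) - 1))) := h1
        _ = ((B + 1) * r ^ (s - ((n:ℝ) - 1))) * x ^ s := by ring
    exact le_of_mul_le_mul_right h2 hxs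
  -- lower bound on u
  set K : ℝ := C / (B + 1) with hK_def
  have hK0 : 0 < K := div_pos hC0 hB1
  set p : ℝ := (n:ℝ) - s with hp_def
  set β : ℝ := ((n:ℝ) - 1 - s) / p with hβ_def
  clear_value K p β
  have hub : K ^ ((1:ℝ) / p) * r ^ β ≤ u := by
    have hup : (0:ℝ) < u ^ (s - (n:ℝ)) := Real.rpow_pos_of_pos hu0 _
    have hrp : (0:ℝ) < r ^ (s - ((n:ℝ) - 1)) := Real.rpow_pos_of_pos hr0 _
    have h1 : K * u ^ (s - (n:ℝ)) ≤ r ^ (s - ((n:ℝ) - 1)) := by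
      rw [hK_def, div_mul_eq_mul_div, div_le_iff₀ hB1]
      calc C * u ^ (s - (n:ℝ)) ≤ (B + 1) * r ^ (s - ((n:ℝ) - 1)) := key
        _ = r ^ (s - ((n:ℝ) - 1)) * (B + 1) := by ring
    have h2 : K / r ^ (s - ((n:ℝ) - 1)) ≤ 1 / u ^ (s - (n:ℝ)) :=
      (div_le_div_iff₀ hrp hup).2 (by linarith)
    have h3 : K * r ^ ((n:ℝ) - 1 - s) ≤ u ^ ((n:ℝ) - s) := by
      have e1 : r ^ ((n:ℝ) - 1 - s) = (r ^ (s - ((n:ℝ) - 1)))⁻¹ := by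
        rw [← Real.rpow_neg hr0.le]; ring_nf
      have e2 : u ^ ((n:ℝ) - s) = (u ^ (s - (n:ℝ)))⁻¹ := by
        rw [← Real.rpow_neg hu0.le]; ring_nf
      rw [e1, e2]
      rw [div_eq_mul_inv] at h2
      calc K * (r ^ (s - ((n:ℝ) - 1)))⁻¹ ≤ 1 / u ^ (s - (n:ℝ)) := h2
        _ = (u ^ (s - (n:ℝ)))⁻¹ := one_div _
    have h4 : (K ^ ((1:ℝ) / p) * r ^ β) ^ p = K * r ^ ((n:ℝ) - 1 - s) := by
      rw [Real.mul_rpow (Real.rpow_nonneg hK0.le _) (Real.rpow_nonneg hr0.le _),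
        ← Real.rpow_mul hK0.le, ← Real.rpow_mul hr0.le,
        show (1:ℝ) / p * p = 1 by field_simp,
        show β * p = (n:ℝ) - 1 - s by rw [hβ_def]; field_simp,
        Real.rpow_one]
    by_contra hcon
    push_neg at hcon
    have h5 : u ^ p < (K ^ ((1:ℝ) / p) * r ^ β) ^ p :=
      Real.rpow_lt_rpow hu0.le hcon hp
    rw [h4] at h5
    rw [hp_def] at h5
    linarith
  -- r is small
  have hrsmall : r ≤ (1:ℝ)/2 * (K ^ ((1:ℝ) / p) * r ^ β) := by
    have h1 : r ^ ((1:ℝ)/p) ≤ (1:ℝ)/2 * K ^ ((1:ℝ)/p) := by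
      have h2 : r ≤ ((1:ℝ)/2) ^ p * K := by
        rw [hK_def, ← mul_div_assoc]
        exact hr3
      calc r ^ ((1:ℝ)/p) ≤ (((1:ℝ)/2) ^ p * K) ^ ((1:ℝ)/p) :=
            Real.rpow_le_rpow hr0.le h2 (by positivity)
        _ = (1:ℝ)/2 * K ^ ((1:ℝ)/p) := by
            rw [Real.mul_rpow (by positivity) hK0.le, ← Real.rpow_mul (by norm_num),
              show p * ((1:ℝ)/p) = 1 by field_simp, Real.rpow_one]
    have h3 : r = r ^ β * r ^ ((1:ℝ)/p) := by
      have hpne : p ≠ 0 := ne_of_gt hp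
      rw [← Real.rpow_add hr0, show β + (1:ℝ)/p = 1 by
        rw [hβ_def]; field_simp; rw [hp_def]; ring, Real.rpow_one]
    calc r = r ^ β * r ^ ((1:ℝ)/p) := h3
      _ ≤ r ^ β * ((1:ℝ)/2 * K ^ ((1:ℝ)/p)) :=
          mul_le_mul_of_nonneg_left h1 (Real.rpow_nonneg hr0.le _)
      _ = (1:ℝ)/2 * (K ^ ((1:ℝ)/p) * r ^ β) := by ring
  have hfin : r ^ β * ((1:ℝ)/2 * K ^ ((1:ℝ)/p)) ≤ u - r := by
    linarith only [hub, hrsmall]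
  calc r ^ β * ((1:ℝ)/2 * K ^ ((1:ℝ)/p)) ≤ u - r := hfin
    _ = α := by rw [hu_def]; ring
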